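/- For every real r ≥ 0 and every n ∈ ℕ with n ≥ 1, the sequence (⦃n,k⦄_r)_{k=0}^n of r-Stirling numbers of the second kind is strictly log-concave: for every k ∈ {1,...,n-1} one has ⦃n,k⦄_r² > ⦃n,k+1⦄_r · ⦃n,k-1⦄_r. -/

import Mathlib

open Finset Filter MeasureTheory

/-- r-Stirling numbers of the first kind. -/
noncomputable def stirFir (r : ℝ) : ℕ → ℕ → ℝ
  | 0, 0 => 1
  | 0, _ + 1 => 0
  | n + 1, 0 => ((n : ℝ) + r) * stirFir r n 0
  | n + 1, k + 1 => ((n : ℝ) + r) * stirFir r n (k + 1) + stirFir r n k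

/-- r-Stirling numbers of the second kind. -/
noncomputable def stirSec (r : ℝ) : ℕ → ℕ → ℝ
  | 0, 0 => 1
  | 0, _ + 1 => 0
  | n + 1, 0 => r * stirSec r n 0
  | n + 1, k + 1 => ((k : ℝ) + 1 + r) * stirSec r n (k + 1) + stirSec r n k

/-- The r-Lah number L(n,k)_r. -/
noncomputable def lahNum (r : ℝ) (n k : ℕ) : ℝ :=
  ∑ j ∈ Finset.Icc k n, stirFir r n j * stirSec r j k

/-- The probability mass function of the r-Lah distribution. -/
noncomputable def lahPMF (r : ℝ) (n k j : ℕ) : ℝ :=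
  stirFir r n j * stirSec r j k / lahNum r n k

/-- The expectation of the r-Lah distribution. -/
noncomputable def lahExp (r : ℝ) (n k : ℕ) : ℝ :=
  (∑ j ∈ Finset.Icc k n, (j : ℝ) * stirFir r n j * stirSec r j k) / lahNum r n k


lemma stirSec_succ (r : ℝ) (n k : ℕ) :
    stirSec r (n+1) (k+1) = ((k : ℝ) + 1 + r) * stirSec r n (k+1) + stirSec r n k := by
  rw [stirSec]

lemma stirSec_succ_zero (r : ℝ) (n : ℕ) : stirSec r (n+1) 0 = r * stirSec r n 0 := by
  rw [stirSec]

lemma stirSec_eq_zero (r : ℝ) : ∀ n k : ℕ, n < k → stirSec r n k = 0 := by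
  intro n
  induction n with
  | zero =>
    intro k hk
    match k, hk with
    | k + 1, _ => simp [stirSec]
  | succ n ih =>
    intro k hk
    match k, hk with
    | k + 1, hk =>
      rw [stirSec, ih (k+1) (by omega), ih k (by omega)]
      ring

lemma stirSec_diag (r : ℝ) : ∀ n : ℕ, stirSec r n n = 1 := by
  intro n
  induction n with
  | zero => simp [stirSec]
  | succ n ih => rw [stirSec, stirSec_eq_zero r n (n+1) (by omega), ih]; ring

lemma stirSec_nonneg (r : ℝ) (hr : 0 ≤ r) : ∀ n k : ℕ, 0 ≤ stirSec r n k := by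
  intro n
  induction n with
  | zero => intro k; match k with
    | 0 => norm_num [stirSec]
    | k + 1 => norm_num [stirSec]
  | succ n ih =>
    intro k
    match k with
    | 0 => rw [stirSec]; exact mul_nonneg hr (ih 0)
    | k + 1 =>
      rw [stirSec]
      have := ih (k+1); have := ih k
      positivity

lemma stirSec_pos (r : ℝ) (hr : 0 ≤ r) : ∀ n k : ℕ, 1 ≤ k → k ≤ n → 0 < stirSec r n k := by
  intro n
  induction n with
  | zero => intro k h1 h2; omega
  | succ n ih =>
    intro k h1 h2
    match k, h1 with
    | k + 1, _ =>
      rw [stirSec]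
      rcases Nat.lt_or_ge n (k+1) with h | h
      · have hk : k = n := by omega
        rw [hk, stirSec_eq_zero r n (n+1) (by omega), stirSec_diag]
        push_cast; nlinarith
      · have h3 := ih (k+1) (by omega) h
        have h4 := stirSec_nonneg r hr n k
        have : (0:ℝ) < (k:ℝ) + 1 + r := by positivity
        nlinarith

lemma stirSec_lc (r : ℝ) (hr : 0 ≤ r) :
    ∀ n k : ℕ, stirSec r n (k+2) * stirSec r n k ≤ stirSec r n (k+1) ^ 2 := by
  intro n
  induction n with
  | zero =>
    intro k
    rw [stirSec_eq_zero r 0 (k+2) (by omega)]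
    have := stirSec_nonneg r hr 0 (k+1)
    nlinarith
  | succ n ih =>
    intro k
    -- four-term consequence at level n
    have four : ∀ j : ℕ, stirSec r n (j+3) * stirSec r n j ≤
        stirSec r n (j+2) * stirSec r n (j+1) := by
      intro j
      rcases eq_or_lt_of_le (stirSec_nonneg r hr n (j+1)) with h1 | h1
      · -- stirSec r n (j+1) = 0, so j+1 > n, so j+3 > n
        have hz : n < j + 1 := by
          by_contra hc
          exact (stirSec_pos r hr n (j+1) (by omega) (by omega)).ne' h1.symm
        rw [stirSec_eq_zero r n (j+3) (by omega)]
        have := stirSec_nonneg r hr n (j+2)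
        have := stirSec_nonneg r hr n (j+1)
        nlinarith
      · rcases eq_or_lt_of_le (stirSec_nonneg r hr n (j+2)) with h2 | h2
        · have hz : n < j + 2 := by
            by_contra hc
            exact (stirSec_pos r hr n (j+2) (by omega) (by omega)).ne' h2.symm
          rw [stirSec_eq_zero r n (j+3) (by omega)]
          have := stirSec_nonneg r hr n j
          nlinarith
        · have hA := ih (j+1)
          have hB := ih j
          have h0 := stirSec_nonneg r hr n j
          have h3 := stirSec_nonneg r hr n (j+3)
          nlinarith [mul_pos h1 h2, mul_le_mul_of_nonneg_left hA h0,
            mul_le_mul_of_nonneg_left hB h3]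
    obtain ⟨c, hc0, hb, hc1, hc2⟩ : ∃ c : ℝ, 0 ≤ c ∧
        stirSec r (n+1) k = ((k : ℝ) + r) * stirSec r n k + c ∧
        stirSec r n (k+1) * c ≤ stirSec r n k ^ 2 ∧
        stirSec r n (k+2) * c ≤ stirSec r n (k+1) * stirSec r n k := by
      match k with
      | 0 =>
        refine ⟨0, le_refl _, by rw [stirSec_succ_zero]; push_cast; ring, ?_, ?_⟩
        · simpa using sq_nonneg (stirSec r n 0)
        · simpa using mul_nonneg (stirSec_nonneg r hr n 1) (stirSec_nonneg r hr n 0)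
      | m + 1 =>
        refine ⟨stirSec r n m, stirSec_nonneg r hr n m, ?_, ih m, four m⟩
        rw [stirSec_succ]; push_cast; ring
    have e2 : stirSec r (n+1) (k+2)
        = ((k : ℝ) + 2 + r) * stirSec r n (k+2) + stirSec r n (k+1) := by
      show stirSec r (n+1) ((k+1)+1) = _
      rw [stirSec_succ]; push_cast; ring
    have e1 : stirSec r (n+1) (k+1)
        = ((k : ℝ) + 1 + r) * stirSec r n (k+1) + stirSec r n k := stirSec_succ r n k
    rw [e2, e1, hb]
    have hA0 := stirSec_nonneg r hr n k
    have hA1 := stirSec_nonneg r hr n (k+1)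
    have hA2 := stirSec_nonneg r hr n (k+2)
    nlinarith [mul_nonneg (sq_nonneg ((k:ℝ)+1+r)) (sub_nonneg.2 (ih k)),
      mul_nonneg (show (0:ℝ) ≤ (k:ℝ)+2+r by positivity) (sub_nonneg.2 hc2),
      mul_nonneg hA2 hA0, sub_nonneg.2 hc1]

lemma stirSec_four (r : ℝ) (hr : 0 ≤ r) (n j : ℕ) :
    stirSec r n (j+3) * stirSec r n j ≤ stirSec r n (j+2) * stirSec r n (j+1) := by
  rcases eq_or_lt_of_le (stirSec_nonneg r hr n (j+1)) with h1 | h1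
  · have hz : n < j + 1 := by
      by_contra hc
      exact (stirSec_pos r hr n (j+1) (by omega) (by omega)).ne' h1.symm
    rw [stirSec_eq_zero r n (j+3) (by omega)]
    have := stirSec_nonneg r hr n (j+2)
    have := stirSec_nonneg r hr n (j+1)
    nlinarith
  · rcases eq_or_lt_of_le (stirSec_nonneg r hr n (j+2)) with h2 | h2
    · have hz : n < j + 2 := by
        by_contra hc
        exact (stirSec_pos r hr n (j+2) (by omega) (by omega)).ne' h2.symm
      rw [stirSec_eq_zero r n (j+3) (by omega)]
      have := stirSec_nonneg r hr n j
      nlinarith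
    · have hA := stirSec_lc r hr n (j+1)
      have hB := stirSec_lc r hr n j
      have h0 := stirSec_nonneg r hr n j
      have h3 := stirSec_nonneg r hr n (j+3)
      nlinarith [mul_pos h1 h2, mul_le_mul_of_nonneg_left hA h0,
        mul_le_mul_of_nonneg_left hB h3]

lemma stirSec_slc (r : ℝ) (hr : 0 ≤ r) :
    ∀ n k : ℕ, k + 2 ≤ n → stirSec r n (k+2) * stirSec r n k < stirSec r n (k+1) ^ 2 := by
  intro n
  induction n with
  | zero => intro k hk; omega
  | succ n ih =>
    intro k hk
    have hstrict : stirSec r n (k+2) * stirSec r n k < stirSec r n (k+1) ^ 2 := by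
      rcases Nat.lt_or_ge n (k+2) with h | h
      · have hk1 : k + 1 = n := by omega
        rw [stirSec_eq_zero r n (k+2) h, hk1, stirSec_diag]
        norm_num
      · exact ih k h
    obtain ⟨c, hc0, hb, hc1, hc2⟩ : ∃ c : ℝ, 0 ≤ c ∧
        stirSec r (n+1) k = ((k : ℝ) + r) * stirSec r n k + c ∧
        stirSec r n (k+1) * c ≤ stirSec r n k ^ 2 ∧
        stirSec r n (k+2) * c ≤ stirSec r n (k+1) * stirSec r n k := by
      match k with
      | 0 =>
        refine ⟨0, le_refl _, by rw [stirSec_succ_zero]; ring, ?_, ?_⟩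
        · simpa using sq_nonneg (stirSec r n 0)
        · simpa using mul_nonneg (stirSec_nonneg r hr n 1) (stirSec_nonneg r hr n 0)
      | m + 1 =>
        refine ⟨stirSec r n m, stirSec_nonneg r hr n m, ?_, stirSec_lc r hr n m,
          stirSec_four r hr n m⟩
        rw [stirSec_succ]; push_cast; ring
    have e2 : stirSec r (n+1) (k+2)
        = ((k : ℝ) + 2 + r) * stirSec r n (k+2) + stirSec r n (k+1) := by
      show stirSec r (n+1) ((k+1)+1) = _
      rw [stirSec_succ]; push_cast; ring
    have e1 : stirSec r (n+1) (k+1)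
        = ((k : ℝ) + 1 + r) * stirSec r n (k+1) + stirSec r n k := stirSec_succ r n k
    rw [e2, e1, hb]
    have hA0 := stirSec_nonneg r hr n k
    have hA1 := stirSec_nonneg r hr n (k+1)
    have hA2 := stirSec_nonneg r hr n (k+2)
    nlinarith [mul_pos (show (0:ℝ) < ((k:ℝ)+1+r)^2 by positivity) (sub_pos.2 hstrict),
      mul_nonneg (show (0:ℝ) ≤ (k:ℝ)+2+r by positivity) (sub_nonneg.2 hc2),
      mul_nonneg hA2 hA0, sub_nonneg.2 hc1]

theorem stirSec_strict_log_concave (r : ℝ) (hr : 0 ≤ r) (n : ℕ) (hn : 1 ≤ n)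
    (k : ℕ) (hk1 : 1 ≤ k) (hk2 : k + 1 ≤ n) :
    stirSec r n (k + 1) * stirSec r n (k - 1) < (stirSec r n k) ^ 2 := by
  match k, hk1 with
  | m + 1, _ => exact stirSec_slc r hr n m (by omega)
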